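/- Define by recursion on ordinals: ℷ₀ = ℵ₀; ℷ_{α+1} = min{ ℷ : 2^ℷ > 2^{ℷ_α} }; ℷ_α = Σ_{β<α} ℷ_β for limit α. Then the sequence (ℷ_α) is strictly increasing, and each ℷ_{α+1} is a regular cardinal. -/

import Mathlib

open Cardinal

universe u

/-- The gimel sequence: `ℷ₀ = ℵ₀`, `ℷ_{α+1} = min {ℷ : 2^ℷ > 2^{ℷ_α}}`, and
`ℷ_α = Σ_{β<α} ℷ_β` for limit `α`. -/
noncomputable def gimel (α : Ordinal.{u}) : Cardinal.{u} :=
  Ordinal.limitRecOn α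
    ℵ₀
    (fun _ g => sInf {c : Cardinal.{u} | (2 : Cardinal.{u}) ^ g < 2 ^ c})
    (fun o _ IH => Cardinal.sum fun i : o.ToType =>
      IH (@Ordinal.typein o.ToType (· < ·) isWellOrder_lt i)
        (Ordinal.typein_lt_self i))

lemma gimel_zero : gimel (0 : Ordinal.{u}) = ℵ₀ :=
  Ordinal.limitRecOn_zero _ _ _

lemma gimel_succ (α : Ordinal.{u}) :
    gimel (Order.succ α) = sInf {c : Cardinal.{u} | (2 : Cardinal.{u}) ^ gimel α < 2 ^ c} :=
  Ordinal.limitRecOn_succ _ _ _ _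

lemma gimel_add_one (α : Ordinal.{u}) :
    gimel (α + 1) = sInf {c : Cardinal.{u} | (2 : Cardinal.{u}) ^ gimel α < 2 ^ c} := by
  rw [Ordinal.add_one_eq_succ]; exact gimel_succ α

lemma gimel_limit {o : Ordinal.{u}} (h : Order.IsSuccLimit o) :
    gimel o = Cardinal.sum fun i : o.ToType =>
      gimel (@Ordinal.typein o.ToType (· < ·) isWellOrder_lt i) :=
  Ordinal.limitRecOn_limit _ _ _ _ h

lemma two_pow_gimel_lt (α : Ordinal.{u}) :
    (2 : Cardinal.{u}) ^ gimel α < 2 ^ gimel (α + 1) := by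
  rw [gimel_add_one]
  have hne : {c : Cardinal.{u} | (2 : Cardinal.{u}) ^ gimel α < 2 ^ c}.Nonempty :=
    ⟨2 ^ gimel α, Cardinal.cantor (2 ^ gimel α)⟩
  exact csInf_mem hne

lemma gimel_succ_min {α : Ordinal.{u}} {θ : Cardinal.{u}} (h : θ < gimel (α + 1)) :
    (2 : Cardinal.{u}) ^ θ ≤ 2 ^ gimel α := by
  by_contra hc
  push_neg at hc
  exact h.not_ge (le_of_eq_of_le (gimel_add_one α) (csInf_le' hc))

lemma gimel_lt_add_one (α : Ordinal.{u}) : gimel α < gimel (α + 1) := by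
  by_contra h
  push_neg at h
  exact (two_pow_gimel_lt α).not_ge (Cardinal.power_le_power_left two_ne_zero h)

lemma gimel_strictMono : StrictMono gimel.{u} := by
  have key : ∀ α : Ordinal.{u}, ∀ β < α, gimel β < gimel α := by
    intro α
    induction α using Ordinal.induction with
    | h α IH =>
      intro β hβ
      rcases Ordinal.zero_or_succ_or_isSuccLimit α with rfl | ⟨γ, rfl⟩ | hl
      · exact absurd hβ (show (0 : Ordinal) ≤ β from zero_le).not_gt
      · rw [Order.lt_succ_iff] at hβ
        rw [← Ordinal.add_one_eq_succ]
        rcases hβ.lt_or_eq with h | rfl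
        · exact (IH γ (Order.lt_succ γ) β h).trans (gimel_lt_add_one γ)
        · exact gimel_lt_add_one β
      · have h1 : β + 1 < α := by
          rw [Ordinal.add_one_eq_succ]; exact hl.succ_lt hβ
        refine (gimel_lt_add_one β).trans_le ?_
        rw [gimel_limit hl]
        have hle := Cardinal.le_sum
          (fun i : α.ToType => gimel (@Ordinal.typein α.ToType (· < ·) isWellOrder_lt i))
          (Ordinal.ToType.mk ⟨β + 1, h1⟩)
        have e : @Ordinal.typein α.ToType (· < ·) isWellOrder_lt (Ordinal.ToType.mk ⟨β + 1, h1⟩) = β + 1 :=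
          congrArg Subtype.val (Ordinal.ToType.mk.symm_apply_apply ⟨β + 1, h1⟩)
        rw [e] at hle
        exact hle
  exact fun β α h => key α β h

lemma aleph0_le_gimel (α : Ordinal.{u}) : ℵ₀ ≤ gimel α := by
  rcases eq_or_ne α 0 with rfl | h
  · exact gimel_zero.ge
  · exact gimel_zero.symm.trans_le
      (gimel_strictMono (pos_iff_ne_zero.mpr h)).le

theorem stmt6 : StrictMono gimel ∧ ∀ α : Ordinal.{u}, (gimel (α + 1)).IsRegular := by
  refine ⟨gimel_strictMono, fun α => ?_⟩
  set κ := gimel (α + 1) with hκ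
  have hκ0 : ℵ₀ ≤ κ := (aleph0_le_gimel α).trans (gimel_lt_add_one α).le
  refine ⟨hκ0, ?_⟩
  by_contra hcof
  push_neg at hcof
  obtain ⟨ι, f, hlsub, hι⟩ := Ordinal.exists_lsub_cof κ.ord
  have hlim : Order.IsSuccLimit κ.ord := Cardinal.isSuccLimit_ord hκ0
  -- each successor stays below κ.ord
  have hfi : ∀ i, (Order.succ (f i)).card < κ := by
    intro i
    rw [← Cardinal.lt_ord]
    exact hlim.succ_lt (hlsub ▸ Ordinal.lt_lsub f i)
  -- κ ≤ sum of cards of the succ (f i)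
  have hsum : κ ≤ Cardinal.sum fun i => (Order.succ (f i)).card := by
    have h1 : κ = (Ordinal.lsub f).card := by rw [hlsub, Cardinal.card_ord]
    have h2 : Ordinal.lsub f = ⨆ i, Order.succ (f i) := rfl
    rw [h1, h2]
    exact Ordinal.card_iSup_le_sum_card (fun i => Order.succ (f i))
  -- bound 2^κ
  have hbound : (2 : Cardinal.{u}) ^ κ ≤ (2 ^ gimel α) ^ (#ι) := by
    calc (2 : Cardinal.{u}) ^ κ
        ≤ 2 ^ Cardinal.sum fun i => (Order.succ (f i)).card :=
          Cardinal.power_le_power_left two_ne_zero hsum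
      _ = Cardinal.prod fun i => (2 : Cardinal.{u}) ^ (Order.succ (f i)).card :=
          Cardinal.power_sum 2 _
      _ ≤ Cardinal.prod fun _ : ι => (2 : Cardinal.{u}) ^ gimel α :=
          Cardinal.prod_le_prod _ _ fun i => gimel_succ_min (hfi i)
      _ = (2 ^ gimel α) ^ (#ι) := by simp [Cardinal.prod_const]
  -- simplify the bound
  have hcof' : #ι < κ := hι ▸ hcof
  have hmax : gimel α * #ι < κ := by
    rcases eq_or_ne (#ι) 0 with h0 | h0
    · rw [h0, mul_zero]; exact hκ0.trans_lt' (by simpa using Cardinal.aleph0_pos)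
    · calc gimel α * #ι ≤ gimel α * max (gimel α) (#ι) :=
            mul_le_mul_right (le_max_right _ _) _
        _ ≤ max (gimel α) (#ι) * max (gimel α) (#ι) :=
            mul_le_mul_left (le_max_left _ _) _
        _ = max (gimel α) (#ι) := Cardinal.mul_eq_self ((aleph0_le_gimel α).trans (le_max_left _ _))
        _ < κ := max_lt (gimel_lt_add_one α) hcof'
  have hfinal : (2 : Cardinal.{u}) ^ κ ≤ 2 ^ gimel α := by
    calc (2 : Cardinal.{u}) ^ κ ≤ (2 ^ gimel α) ^ (#ι) := hbound
      _ = 2 ^ (gimel α * #ι) := Cardinal.power_mul.symm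
      _ ≤ 2 ^ gimel α := gimel_succ_min hmax
  exact (two_pow_gimel_lt α).not_ge hfinal
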